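/- There exists an instance (with 2 classes of 3 agents each and 4 items) on which every deterministic non-wasteful online matching algorithm outputs a matching X with V₁(X) = 1 while mms₁ ≥ 2, where class 1 is the class receiving fewer items; hence no deterministic online algorithm (even wasteful) achieves α-CMMS for any α > 1/2. -/

import Mathlib

open Finset

variable {A : Type*} [Fintype A] [DecidableEq A] {k : ℕ}

/-- The set of agents that like the item arriving at step `t`. -/
def likersAt (L : List (Finset A)) (t : ℕ) : Finset A := L.getD t ∅

/-- A finset of (item index, agent) pairs is a partial matching. -/
def IsPartialMatching (P : Finset (ℕ × A)) : Prop :=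
  ∀ p ∈ P, ∀ q ∈ P, (p.1 = q.1 ∨ p.2 = q.2) → p = q

instance (P : Finset (ℕ × A)) : Decidable (IsPartialMatching P) := by
  unfold IsPartialMatching; infer_instance

/-- Optimistic valuation `V*` of the class with agents `C` for the set `S` of item
indices: the maximum size of a matching between `S` and `C` along the likes in `L`. -/
def Vstar (L : List (Finset A)) (C : Finset A) (S : Finset ℕ) : ℕ :=
  ((S ×ˢ C).powerset.filter
    (fun P => (∀ p ∈ P, p.2 ∈ likersAt L p.1) ∧ IsPartialMatching P)).sup Finset.card

/-- The agents of class `i`. -/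
def classAgents (classOf : A → Fin k) (i : Fin k) : Finset A :=
  Finset.univ.filter fun a => classOf a = i

/-- A deterministic online algorithm: given the liker sets of previously arrived items
and the liker set of the current item, it proposes an agent (or discards the item). -/
abbrev OnlineAlg (A : Type*) := List (Finset A) → Finset A → Option A

/-- The set of agents matched before step `t` when `Alg` runs on instance `L`. -/
def matchedUpTo (Alg : OnlineAlg A) (L : List (Finset A)) : ℕ → Finset A
  | 0 => ∅
  | t + 1 =>
    let prev := matchedUpTo Alg L t
    match Alg (L.take t) (likersAt L t) with
    | some a => if a ∈ likersAt L t ∧ a ∉ prev then insert a prev else prev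
    | none => prev

/-- The agent to whom item `t` is (irrevocably) matched by `Alg` on instance `L`;
a proposal is effective only if the proposed agent likes the item and is unmatched. -/
def assignAt (Alg : OnlineAlg A) (L : List (Finset A)) (t : ℕ) : Option A :=
  match Alg (L.take t) (likersAt L t) with
  | some a => if a ∈ likersAt L t ∧ a ∉ matchedUpTo Alg L t then some a else none
  | none => none

/-- The set of items matched to agents of class `j`. -/
def classItems (classOf : A → Fin k) (Alg : OnlineAlg A) (L : List (Finset A))
    (j : Fin k) : Finset ℕ :=
  (Finset.range L.length).filter fun t =>
    ∃ a ∈ (Finset.univ : Finset A), assignAt Alg L t = some a ∧ classOf a = j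

/-- Non-wastefulness of an online algorithm: whenever an arriving item is liked by
some currently unmatched agent, the item is matched. -/
def NonWasteful (Alg : OnlineAlg A) : Prop :=
  ∀ (L : List (Finset A)) (t : ℕ), t < L.length →
    (∃ a ∈ likersAt L t, a ∉ matchedUpTo Alg L t) → (assignAt Alg L t).isSome

/-- `Alg` is `α`-CEF1: on every instance, for every pair of classes `i, j`, either
class `j` receives no item or the envy of `i` towards `j` is bounded after removing
one item from `j`'s bundle. -/
def IsCEF1 (classOf : A → Fin k) (α : ℝ) (Alg : OnlineAlg A) : Prop :=
  ∀ (L : List (Finset A)) (i j : Fin k),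
    classItems classOf Alg L j = ∅ ∨
    ∃ t ∈ classItems classOf Alg L j,
      ((classItems classOf Alg L i).card : ℝ) ≥
        α * (Vstar L (classAgents classOf i) (classItems classOf Alg L j \ {t}) : ℝ)

/-- The maximin share of class `i`: the best over indivisible matchings `X` of all
items to all agents of the worst bundle value `V*ᵢ(Yⱼ(X))` over classes `j`. -/
noncomputable def mmsShare (classOf : A → Fin k) (L : List (Finset A)) (i : Fin k) : ℕ :=
  sSup {v : ℕ | ∃ X ∈ ((Finset.range L.length) ×ˢ (Finset.univ : Finset A)).powerset,
    (∀ p ∈ X, p.2 ∈ likersAt L p.1) ∧ IsPartialMatching X ∧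
    ∀ j : Fin k, v ≤ Vstar L (classAgents classOf i)
      ((X.filter fun p => classOf p.2 = j).image Prod.fst)}

/-- `Alg` is `α`-CMMS on every instance. -/
def IsCMMS (classOf : A → Fin k) (α : ℝ) (Alg : OnlineAlg A) : Prop :=
  ∀ (L : List (Finset A)) (i : Fin k),
    ((classItems classOf Alg L i).card : ℝ) ≥ α * (mmsShare classOf L i : ℝ)

section Aux

def cls6 : Fin 6 → Fin 2 := fun a => if (a : ℕ) < 3 then 0 else 1

def mate6 : Fin 6 → Fin 6 := fun x =>
  if x = 0 then 1 else if (x : ℕ) < 3 then 0 else if x = 3 then 4 else 3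

lemma Vstar_le {A : Type*} [Fintype A] [DecidableEq A] (L : List (Finset A)) (C : Finset A)
    (S : Finset ℕ) : Vstar L C S ≤ (S ×ˢ C).card := by
  apply Finset.sup_le
  intro P hP
  rw [Finset.mem_filter, Finset.mem_powerset] at hP
  exact Finset.card_le_card hP.1

lemma Vstar_ge {A : Type*} [Fintype A] [DecidableEq A] (L : List (Finset A)) (C : Finset A)
    (S : Finset ℕ) (P : Finset (ℕ × A)) (hP : P ⊆ S ×ˢ C)
    (hlike : ∀ p ∈ P, p.2 ∈ likersAt L p.1) (hpm : IsPartialMatching P) :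
    P.card ≤ Vstar L C S :=
  Finset.le_sup (Finset.mem_filter.mpr ⟨Finset.mem_powerset.mpr hP, hlike, hpm⟩)

lemma mms_bdd (L : List (Finset (Fin 6))) (i : Fin 2) :
    BddAbove {v : ℕ | ∃ X ∈ ((Finset.range L.length) ×ˢ (Finset.univ : Finset (Fin 6))).powerset,
      (∀ p ∈ X, p.2 ∈ likersAt L p.1) ∧ IsPartialMatching X ∧
      ∀ j : Fin 2, v ≤ Vstar L (classAgents cls6 i)
        ((X.filter fun p => cls6 p.2 = j).image Prod.fst)} := by
  refine ⟨(Finset.range L.length).card * 6, ?_⟩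
  rintro v ⟨X, hX, hlike, hpm, hv⟩
  refine (hv 0).trans ((Vstar_le _ _ _).trans ?_)
  rw [Finset.card_product]
  refine Nat.mul_le_mul ?_ ?_
  · refine Finset.card_le_card ?_
    intro t ht
    rw [Finset.mem_image] at ht
    obtain ⟨p, hp, rfl⟩ := ht
    have hpX := Finset.filter_subset _ _ hp
    have := Finset.mem_powerset.mp hX hpX
    exact (Finset.mem_product.mp this).1
  · calc (classAgents cls6 i).card ≤ (Finset.univ : Finset (Fin 6)).card :=
        Finset.card_filter_le _ _
      _ = 6 := by simp

lemma mms_ge_one (i : Fin 2) :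
    1 ≤ mmsShare cls6 [Finset.univ, Finset.univ, (∅ : Finset (Fin 6)), ∅] i := by
  apply le_csSup (mms_bdd _ _)
  refine ⟨({(0, (0 : Fin 6)), (1, (3 : Fin 6))} : Finset (ℕ × Fin 6)),
    Finset.mem_powerset.mpr (by decide), by decide, by decide, ?_⟩
  fin_cases i <;> decide

lemma mms_ge_two (a b : Fin 6) (hab : cls6 a ≠ cls6 b) :
    2 ≤ mmsShare cls6 [Finset.univ, Finset.univ, {a, b}, {a, b}] (cls6 a) := by
  apply le_csSup (mms_bdd _ _)
  refine ⟨({(0, mate6 a), (1, mate6 b), (2, a), (3, b)} : Finset (ℕ × Fin 6)),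
    Finset.mem_powerset.mpr ?_, ?_, ?_, ?_⟩ <;>
    fin_cases a <;> fin_cases b <;> revert hab <;> decide

lemma assignAt_none_of_subset {A : Type*} [Fintype A] [DecidableEq A] (Alg : OnlineAlg A)
    (L : List (Finset A)) (t : ℕ) (h : likersAt L t ⊆ matchedUpTo Alg L t) :
    assignAt Alg L t = none := by
  unfold assignAt
  cases hA : Alg (L.take t) (likersAt L t) with
  | none => rfl
  | some c =>
    show (if c ∈ likersAt L t ∧ c ∉ matchedUpTo Alg L t then some c else none) = none
    rw [if_neg]
    rintro ⟨hc1, hc2⟩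
    exact hc2 (h hc1)

end Aux

lemma matchedUpTo_succ {A : Type*} [Fintype A] [DecidableEq A] (Alg : OnlineAlg A)
    (L : List (Finset A)) (t : ℕ) :
    matchedUpTo Alg L (t + 1) =
      (match Alg (L.take t) (likersAt L t) with
        | some a => if a ∈ likersAt L t ∧ a ∉ matchedUpTo Alg L t
            then insert a (matchedUpTo Alg L t) else matchedUpTo Alg L t
        | none => matchedUpTo Alg L t) := rfl

lemma assignAt_eq {A : Type*} [Fintype A] [DecidableEq A] (Alg : OnlineAlg A)
    (L : List (Finset A)) (t : ℕ) :
    assignAt Alg L t =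
      (match Alg (L.take t) (likersAt L t) with
        | some a => if a ∈ likersAt L t ∧ a ∉ matchedUpTo Alg L t then some a else none
        | none => none) := rfl


/-- Impossibility of `α`-CMMS for `α > 1/2`: with six agents partitioned into two
classes of three (the adversarial instance has four items), no deterministic online
algorithm for matching indivisible items — wasteful or not — is `α`-CMMS for any
`α > 1/2`. -/
theorem stmt_3 (α : ℝ) (hα : α > 1 / 2) :
    ¬ ∃ Alg : OnlineAlg (Fin 6),
      IsCMMS (fun a : Fin 6 => if (a : ℕ) < 3 then (0 : Fin 2) else 1) α Alg := by
  rintro ⟨Alg, h0⟩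
  have h : IsCMMS cls6 α Alg := h0
  have keyFin : ∀ u v : Fin 2, u = v → u ≠ v + 1 := by decide
  have hempty : ∀ (L : List (Finset (Fin 6))) (i : Fin 2), L.length = 4 →
      (∀ t, t < 4 → ∀ x, assignAt Alg L t = some x → cls6 x ≠ i) →
      classItems cls6 Alg L i = ∅ := by
    intro L i hlen hall
    rw [Finset.eq_empty_iff_forall_notMem]
    intro t ht
    simp only [classItems, Finset.mem_filter, Finset.mem_range, hlen] at ht
    obtain ⟨ht4, x, -, hx, hcx⟩ := ht
    exact hall t ht4 x hx hcx
  have contraA : ∀ i : Fin 2,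
      classItems cls6 Alg [Finset.univ, Finset.univ, (∅ : Finset (Fin 6)), ∅] i = ∅ → False := by
    intro i hi
    have hm := mms_ge_one i
    have hc := h [Finset.univ, Finset.univ, (∅ : Finset (Fin 6)), ∅] i
    rw [hi] at hc
    have hm' : (1 : ℝ) ≤
        (mmsShare cls6 [Finset.univ, Finset.univ, (∅ : Finset (Fin 6)), ∅] i : ℝ) := by
      exact_mod_cast hm
    simp only [Finset.card_empty, Nat.cast_zero] at hc
    nlinarith
  have e2b : assignAt Alg [Finset.univ, Finset.univ, (∅ : Finset (Fin 6)), ∅] 2 = none := by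
    apply assignAt_none_of_subset
    rw [show likersAt [Finset.univ, Finset.univ, (∅ : Finset (Fin 6)), ∅] 2 = ∅ from rfl]
    exact Finset.empty_subset _
  have e3b : assignAt Alg [Finset.univ, Finset.univ, (∅ : Finset (Fin 6)), ∅] 3 = none := by
    apply assignAt_none_of_subset
    rw [show likersAt [Finset.univ, Finset.univ, (∅ : Finset (Fin 6)), ∅] 3 = ∅ from rfl]
    exact Finset.empty_subset _
  rcases hA0 : Alg [] Finset.univ with _ | a
  · -- item 0 discarded
    have e0 : ∀ S2 S3 : Finset (Fin 6),
        assignAt Alg [Finset.univ, Finset.univ, S2, S3] 0 = none := by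
      intro S2 S3
      rw [assignAt_eq, show List.take 0 [Finset.univ, Finset.univ, S2, S3] = [] from rfl,
        show likersAt [Finset.univ, Finset.univ, S2, S3] 0 = Finset.univ from rfl, hA0]
    have m1 : ∀ S2 S3 : Finset (Fin 6),
        matchedUpTo Alg [Finset.univ, Finset.univ, S2, S3] 1 = ∅ := by
      intro S2 S3
      rw [matchedUpTo_succ, show List.take 0 [Finset.univ, Finset.univ, S2, S3] = [] from rfl,
        show likersAt [Finset.univ, Finset.univ, S2, S3] 0 = Finset.univ from rfl, hA0]
      rfl
    rcases hA1 : Alg [Finset.univ] Finset.univ with _ | b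
    · apply contraA 0
      refine hempty _ _ rfl ?_
      intro t ht x hx
      interval_cases t
      · rw [e0] at hx; cases hx
      · rw [assignAt_eq,
          show List.take 1 [Finset.univ, Finset.univ, (∅ : Finset (Fin 6)), ∅] = [Finset.univ]
            from rfl,
          show likersAt [Finset.univ, Finset.univ, (∅ : Finset (Fin 6)), ∅] 1 = Finset.univ
            from rfl, hA1] at hx
        cases hx
      · rw [e2b] at hx; cases hx
      · rw [e3b] at hx; cases hx
    · -- item 1 to b
      have e1 : assignAt Alg [Finset.univ, Finset.univ, (∅ : Finset (Fin 6)), ∅] 1 = some b := by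
        rw [assignAt_eq,
          show List.take 1 [Finset.univ, Finset.univ, (∅ : Finset (Fin 6)), ∅] = [Finset.univ]
            from rfl,
          show likersAt [Finset.univ, Finset.univ, (∅ : Finset (Fin 6)), ∅] 1 = Finset.univ
            from rfl, hA1, m1]
        simp
      apply contraA (cls6 b + 1)
      refine hempty _ _ rfl ?_
      intro t ht x hx
      interval_cases t
      · rw [e0] at hx; cases hx
      · rw [e1] at hx; injection hx with hx; subst hx; exact keyFin _ _ rfl
      · rw [e2b] at hx; cases hx
      · rw [e3b] at hx; cases hx
  · -- item 0 to a
    have e0 : ∀ S2 S3 : Finset (Fin 6),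
        assignAt Alg [Finset.univ, Finset.univ, S2, S3] 0 = some a := by
      intro S2 S3
      rw [assignAt_eq, show List.take 0 [Finset.univ, Finset.univ, S2, S3] = [] from rfl,
        show likersAt [Finset.univ, Finset.univ, S2, S3] 0 = Finset.univ from rfl, hA0]
      simp [matchedUpTo]
    have m1 : ∀ S2 S3 : Finset (Fin 6),
        matchedUpTo Alg [Finset.univ, Finset.univ, S2, S3] 1 = {a} := by
      intro S2 S3
      rw [matchedUpTo_succ, show List.take 0 [Finset.univ, Finset.univ, S2, S3] = [] from rfl,
        show likersAt [Finset.univ, Finset.univ, S2, S3] 0 = Finset.univ from rfl, hA0]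
      simp [matchedUpTo]
    rcases hA1 : Alg [Finset.univ] Finset.univ with _ | b
    · -- item 1 discarded
      have e1 : assignAt Alg [Finset.univ, Finset.univ, (∅ : Finset (Fin 6)), ∅] 1 = none := by
        rw [assignAt_eq,
          show List.take 1 [Finset.univ, Finset.univ, (∅ : Finset (Fin 6)), ∅] = [Finset.univ]
            from rfl,
          show likersAt [Finset.univ, Finset.univ, (∅ : Finset (Fin 6)), ∅] 1 = Finset.univ
            from rfl, hA1]
      apply contraA (cls6 a + 1)
      refine hempty _ _ rfl ?_
      intro t ht x hx
      interval_cases t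
      · rw [e0] at hx; injection hx with hx; subst hx; exact keyFin _ _ rfl
      · rw [e1] at hx; cases hx
      · rw [e2b] at hx; cases hx
      · rw [e3b] at hx; cases hx
    · by_cases hba : b = a
      · -- proposal b = a is ineffective
        have e1 : assignAt Alg [Finset.univ, Finset.univ, (∅ : Finset (Fin 6)), ∅] 1 = none := by
          rw [assignAt_eq,
            show List.take 1 [Finset.univ, Finset.univ, (∅ : Finset (Fin 6)), ∅] = [Finset.univ]
              from rfl,
            show likersAt [Finset.univ, Finset.univ, (∅ : Finset (Fin 6)), ∅] 1 = Finset.univ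
              from rfl, hA1, m1, hba]
          simp
        apply contraA (cls6 a + 1)
        refine hempty _ _ rfl ?_
        intro t ht x hx
        interval_cases t
        · rw [e0] at hx; injection hx with hx; subst hx; exact keyFin _ _ rfl
        · rw [e1] at hx; cases hx
        · rw [e2b] at hx; cases hx
        · rw [e3b] at hx; cases hx
      · by_cases hcls : cls6 b = cls6 a
        · -- both items to the same class
          have e1 : assignAt Alg [Finset.univ, Finset.univ, (∅ : Finset (Fin 6)), ∅] 1
              = some b := by
            rw [assignAt_eq,
              show List.take 1 [Finset.univ, Finset.univ, (∅ : Finset (Fin 6)), ∅] = [Finset.univ]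
                from rfl,
              show likersAt [Finset.univ, Finset.univ, (∅ : Finset (Fin 6)), ∅] 1 = Finset.univ
                from rfl, hA1, m1]
            simp [hba]
          apply contraA (cls6 a + 1)
          refine hempty _ _ rfl ?_
          intro t ht x hx
          interval_cases t
          · rw [e0] at hx; injection hx with hx; subst hx; exact keyFin _ _ rfl
          · rw [e1] at hx; injection hx with hx; subst hx; exact keyFin _ _ hcls
          · rw [e2b] at hx; cases hx
          · rw [e3b] at hx; cases hx
        · -- the interesting case: items 0 and 1 to different classes
          have e1 : assignAt Alg [Finset.univ, Finset.univ, ({a, b} : Finset (Fin 6)), {a, b}] 1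
              = some b := by
            rw [assignAt_eq,
              show List.take 1 [Finset.univ, Finset.univ, ({a, b} : Finset (Fin 6)), {a, b}]
                = [Finset.univ] from rfl,
              show likersAt [Finset.univ, Finset.univ, ({a, b} : Finset (Fin 6)), {a, b}] 1
                = Finset.univ from rfl, hA1, m1]
            simp [hba]
          have m2 : matchedUpTo Alg [Finset.univ, Finset.univ, ({a, b} : Finset (Fin 6)), {a, b}] 2
              = insert b {a} := by
            rw [matchedUpTo_succ,
              show List.take 1 [Finset.univ, Finset.univ, ({a, b} : Finset (Fin 6)), {a, b}]
                = [Finset.univ] from rfl,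
              show likersAt [Finset.univ, Finset.univ, ({a, b} : Finset (Fin 6)), {a, b}] 1
                = Finset.univ from rfl, hA1, m1]
            simp [hba]
          have m3 : matchedUpTo Alg [Finset.univ, Finset.univ, ({a, b} : Finset (Fin 6)), {a, b}] 3
              = insert b {a} := by
            rw [matchedUpTo_succ,
              show List.take 2 [Finset.univ, Finset.univ, ({a, b} : Finset (Fin 6)), {a, b}]
                = [Finset.univ, Finset.univ] from rfl,
              show likersAt [Finset.univ, Finset.univ, ({a, b} : Finset (Fin 6)), {a, b}] 2
                = {a, b} from rfl, m2]
            cases hc : Alg [Finset.univ, Finset.univ] ({a, b} : Finset (Fin 6)) with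
            | none => rfl
            | some c =>
              show (if c ∈ ({a, b} : Finset (Fin 6)) ∧ c ∉ insert b {a}
                then insert c (insert b {a}) else insert b {a}) = insert b {a}
              rw [if_neg]
              rintro ⟨h1, h2⟩
              apply h2
              rcases Finset.mem_insert.mp h1 with h1 | h1
              · exact Finset.mem_insert.mpr (Or.inr (by simpa using h1))
              · exact Finset.mem_insert.mpr (Or.inl (by simpa using h1))
          have e2 : assignAt Alg [Finset.univ, Finset.univ, ({a, b} : Finset (Fin 6)), {a, b}] 2
              = none := by
            apply assignAt_none_of_subset
            rw [show likersAt [Finset.univ, Finset.univ, ({a, b} : Finset (Fin 6)), {a, b}] 2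
              = {a, b} from rfl, m2]
            intro x hx
            rcases Finset.mem_insert.mp hx with hx | hx
            · exact Finset.mem_insert.mpr (Or.inr (by simpa using hx))
            · exact Finset.mem_insert.mpr (Or.inl (by simpa using hx))
          have e3 : assignAt Alg [Finset.univ, Finset.univ, ({a, b} : Finset (Fin 6)), {a, b}] 3
              = none := by
            apply assignAt_none_of_subset
            rw [show likersAt [Finset.univ, Finset.univ, ({a, b} : Finset (Fin 6)), {a, b}] 3
              = {a, b} from rfl, m3]
            intro x hx
            rcases Finset.mem_insert.mp hx with hx | hx
            · exact Finset.mem_insert.mpr (Or.inr (by simpa using hx))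
            · exact Finset.mem_insert.mpr (Or.inl (by simpa using hx))
          have hsub : classItems cls6 Alg
              [Finset.univ, Finset.univ, ({a, b} : Finset (Fin 6)), {a, b}] (cls6 a) ⊆ {0} := by
            intro t ht
            simp only [classItems, Finset.mem_filter, Finset.mem_range] at ht
            obtain ⟨ht4, x, -, hx, hcx⟩ := ht
            have ht4' : t < 4 := ht4
            interval_cases t
            · exact Finset.mem_singleton.mpr rfl
            · rw [e1] at hx; injection hx with hx; subst hx; exact absurd hcx hcls
            · rw [e2] at hx; cases hx
            · rw [e3] at hx; cases hx
          have hcard : (classItems cls6 Alg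
              [Finset.univ, Finset.univ, ({a, b} : Finset (Fin 6)), {a, b}] (cls6 a)).card ≤ 1 := by
            simpa using Finset.card_le_card hsub
          have hm := mms_ge_two a b (fun e => hcls e.symm)
          have hc := h [Finset.univ, Finset.univ, ({a, b} : Finset (Fin 6)), {a, b}] (cls6 a)
          have hm' : (2 : ℝ) ≤ (mmsShare cls6
              [Finset.univ, Finset.univ, ({a, b} : Finset (Fin 6)), {a, b}] (cls6 a) : ℝ) := by
            exact_mod_cast hm
          have hcard' : ((classItems cls6 Alg
              [Finset.univ, Finset.univ, ({a, b} : Finset (Fin 6)), {a, b}] (cls6 a)).card : ℝ)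
              ≤ 1 := by exact_mod_cast hcard
          nlinarith
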